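/- Let z be a nonzero vector in ℝⁿ, g a standard Gaussian random vector in ℝⁿ, and λ > 0. Define φ_λ(s) = (|s| − λ)·1_{|s| ≥ λ}. Then E[φ_λ(⟨g,z⟩)] ≤ √(2/π)·‖z‖₂·exp(−λ²/(2‖z‖₂²)). -/

import Mathlib

open MeasureTheory ProbabilityTheory Real Filter
open scoped NNReal ENNReal Topology

/-- `φ_λ(s) = (|s| - λ) 1_{|s| ≥ λ}`. -/
noncomputable def phi (l s : ℝ) : ℝ := if l ≤ |s| then |s| - l else 0

/-- The standard Gaussian measure on `ℝⁿ` (i.i.d. standard normal entries). -/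
noncomputable def stdGaussian (n : ℕ) : Measure (Fin n → ℝ) :=
  Measure.pi fun _ => gaussianReal 0 1

instance stdGaussian_prob (n : ℕ) : IsProbabilityMeasure (stdGaussian n) := by
  unfold _root_.stdGaussian; infer_instance

lemma measurable_phi (l : ℝ) : Measurable (phi l) := by
  unfold phi
  exact Measurable.ite (measurableSet_le measurable_const measurable_abs)
    (measurable_abs.sub measurable_const) measurable_const

lemma phi_nonneg (l s : ℝ) : 0 ≤ phi l s := by
  unfold phi
  split
  · next h => linarith
  · exact le_rfl

section Conv

variable {V W : ℝ}

lemma conv_exp_eq (hV : 0 < V) (hW : 0 < W) (y x : ℝ) :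
    ((Real.sqrt (2 * π * V))⁻¹ * rexp (-(x - 0) ^ 2 / (2 * V))) *
      ((Real.sqrt (2 * π * W))⁻¹ * rexp (-(y - x - 0) ^ 2 / (2 * W)))
      = ((Real.sqrt (2 * π * V))⁻¹ * (Real.sqrt (2 * π * W))⁻¹ *
          rexp (-(y - 0) ^ 2 / (2 * (V + W)))) *
        rexp (-((V + W) / (2 * V * W)) * (x - V * y / (V + W)) ^ 2) := by
  have hVW : (0:ℝ) < V + W := by linarith
  have harg : -(x - 0) ^ 2 / (2 * V) + -(y - x - 0) ^ 2 / (2 * W)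
      = -(y - 0) ^ 2 / (2 * (V + W)) + -((V + W) / (2 * V * W)) * (x - V * y / (V + W)) ^ 2 := by
    field_simp
    ring
  calc ((Real.sqrt (2 * π * V))⁻¹ * rexp (-(x - 0) ^ 2 / (2 * V))) *
      ((Real.sqrt (2 * π * W))⁻¹ * rexp (-(y - x - 0) ^ 2 / (2 * W)))
      = (Real.sqrt (2 * π * V))⁻¹ * (Real.sqrt (2 * π * W))⁻¹ *
        rexp (-(x - 0) ^ 2 / (2 * V) + -(y - x - 0) ^ 2 / (2 * W)) := by
        rw [Real.exp_add]; ring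
    _ = _ := by rw [harg, Real.exp_add]; ring

lemma integrable_conv (hV : 0 < V) (hW : 0 < W) (y : ℝ) :
    Integrable (fun x => ((Real.sqrt (2 * π * V))⁻¹ * rexp (-(x - 0) ^ 2 / (2 * V))) *
      ((Real.sqrt (2 * π * W))⁻¹ * rexp (-(y - x - 0) ^ 2 / (2 * W)))) := by
  have hVW : (0:ℝ) < V + W := by linarith
  have hc : (0:ℝ) < (V + W) / (2 * V * W) := by positivity
  set m : ℝ := V * y / (V + W) with hm
  have hemb : MeasurableEmbedding (fun x : ℝ => x - m) :=
    (MeasurableEquiv.subRight m).measurableEmbedding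
  have hmp : MeasurePreserving (fun x : ℝ => x - m) volume volume :=
    measurePreserving_sub_right volume m
  have h2 : Integrable (fun x : ℝ => rexp (-((V + W) / (2 * V * W)) * (x - m) ^ 2)) volume :=
    (hmp.integrable_comp_emb hemb).mpr (integrable_exp_neg_mul_sq hc)
  have h3 := h2.const_mul ((Real.sqrt (2 * π * V))⁻¹ * (Real.sqrt (2 * π * W))⁻¹ *
    rexp (-(y - 0) ^ 2 / (2 * (V + W))))
  exact h3.congr (Filter.Eventually.of_forall fun x => (conv_exp_eq hV hW y x).symm)

lemma conv_pdf_real (hV : 0 < V) (hW : 0 < W) (y : ℝ) :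
    ∫ x, ((Real.sqrt (2 * π * V))⁻¹ * rexp (-(x - 0) ^ 2 / (2 * V))) *
      ((Real.sqrt (2 * π * W))⁻¹ * rexp (-(y - x - 0) ^ 2 / (2 * W)))
      = (Real.sqrt (2 * π * (V + W)))⁻¹ * rexp (-(y - 0) ^ 2 / (2 * (V + W))) := by
  have hVW : (0:ℝ) < V + W := by linarith
  have hc : (0:ℝ) < (V + W) / (2 * V * W) := by positivity
  have hπ : (0:ℝ) < π := Real.pi_pos
  simp_rw [conv_exp_eq hV hW y]
  rw [integral_const_mul]
  rw [show (∫ x : ℝ, rexp (-((V + W) / (2 * V * W)) * (x - V * y / (V + W)) ^ 2))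
      = ∫ x : ℝ, rexp (-((V + W) / (2 * V * W)) * x ^ 2) from
    integral_sub_right_eq_self (fun u => rexp (-((V + W) / (2 * V * W)) * u ^ 2)) _]
  rw [integral_gaussian]
  have hsq : (Real.sqrt (2 * π * V))⁻¹ * (Real.sqrt (2 * π * W))⁻¹ *
      Real.sqrt (π / ((V + W) / (2 * V * W))) = (Real.sqrt (2 * π * (V + W)))⁻¹ := by
    rw [← Real.sqrt_inv, ← Real.sqrt_inv, ← Real.sqrt_inv,
      ← Real.sqrt_mul (by positivity), ← Real.sqrt_mul (by positivity)]
    congr 1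
    field_simp
  rw [← hsq]
  ring

end Conv

lemma gaussianPDFReal_conv (v w : ℝ≥0) (hv : v ≠ 0) (hw : w ≠ 0) (y : ℝ) :
    ∫ x, gaussianPDFReal 0 v x * gaussianPDFReal 0 w (y - x) = gaussianPDFReal 0 (v + w) y := by
  have hV : (0:ℝ) < v := NNReal.coe_pos.mpr (lt_of_le_of_ne (zero_le : (0:ℝ≥0) ≤ v) (Ne.symm hv))
  have hW : (0:ℝ) < w := NNReal.coe_pos.mpr (lt_of_le_of_ne (zero_le : (0:ℝ≥0) ≤ w) (Ne.symm hw))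
  simp only [gaussianPDFReal_def, NNReal.coe_add]
  exact conv_pdf_real hV hW y

lemma integrable_gaussianPDFReal_conv (v w : ℝ≥0) (hv : v ≠ 0) (hw : w ≠ 0) (y : ℝ) :
    Integrable (fun x => gaussianPDFReal 0 v x * gaussianPDFReal 0 w (y - x)) := by
  have hV : (0:ℝ) < v := NNReal.coe_pos.mpr (lt_of_le_of_ne (zero_le : (0:ℝ≥0) ≤ v) (Ne.symm hv))
  have hW : (0:ℝ) < w := NNReal.coe_pos.mpr (lt_of_le_of_ne (zero_le : (0:ℝ≥0) ≤ w) (Ne.symm hw))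
  simp only [gaussianPDFReal_def]
  exact integrable_conv hV hW y

lemma gaussian_conv (v w : ℝ≥0) :
    Measure.map (fun p : ℝ × ℝ => p.1 + p.2) ((gaussianReal 0 v).prod (gaussianReal 0 w))
      = gaussianReal 0 (v + w) := by
  by_cases hv : v = 0
  · subst hv
    rw [gaussianReal_zero_var, Measure.dirac_prod, zero_add,
      Measure.map_map measurable_add measurable_prodMk_left]
    have h : ((fun p : ℝ × ℝ => p.1 + p.2) ∘ fun y : ℝ => ((0:ℝ), y)) = id := by
      funext y; simp
    rw [h, Measure.map_id]
  by_cases hw : w = 0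
  · subst hw
    rw [gaussianReal_zero_var, Measure.prod_dirac, add_zero,
      Measure.map_map measurable_add measurable_prodMk_right]
    have h : ((fun p : ℝ × ℝ => p.1 + p.2) ∘ fun x : ℝ => (x, (0:ℝ))) = id := by
      funext y; simp
    rw [h, Measure.map_id]
  have hvw : v + w ≠ 0 := by simp [add_eq_zero, hv, hw]
  ext s hs
  have ht : MeasurableSet ((fun p : ℝ × ℝ => p.1 + p.2) ⁻¹' s) := measurable_add hs
  rw [Measure.map_apply measurable_add hs, Measure.prod_apply ht]
  have hker : ∀ x : ℝ,
      (gaussianReal 0 w) (Prod.mk x ⁻¹' ((fun p : ℝ × ℝ => p.1 + p.2) ⁻¹' s))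
        = ∫⁻ u in s, gaussianPDF 0 w (u - x) := by
    intro x
    have h1 : Prod.mk x ⁻¹' ((fun p : ℝ × ℝ => p.1 + p.2) ⁻¹' s) = (fun y => x + y) ⁻¹' s := rfl
    have hemb : MeasurableEmbedding (fun y : ℝ => x + y) :=
      (MeasurableEquiv.addLeft x).measurableEmbedding
    have h2 := (measurePreserving_add_left volume x).setLIntegral_comp_preimage_emb
      hemb (fun u => gaussianPDF 0 w (u - x)) s
    simp only [add_sub_cancel_left] at h2
    rw [h1, gaussianReal_apply 0 hw, ← h2]
  rw [gaussianReal_of_var_ne_zero 0 hv,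
    lintegral_withDensity_eq_lintegral_mul volume (measurable_gaussianPDF 0 v)
      (measurable_measure_prodMk_left ht)]
  simp only [Pi.mul_apply]
  simp_rw [hker]
  have hswap1 : ∀ x : ℝ, gaussianPDF 0 v x * ∫⁻ u in s, gaussianPDF 0 w (u - x)
      = ∫⁻ u in s, gaussianPDF 0 v x * gaussianPDF 0 w (u - x) :=
    fun x => (lintegral_const_mul _ ((measurable_gaussianPDF 0 w).comp
      (measurable_id.sub_const x))).symm
  simp_rw [hswap1]
  have hunc : Measurable
      (Function.uncurry fun x u : ℝ => gaussianPDF 0 v x * gaussianPDF 0 w (u - x)) := by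
    show Measurable fun p : ℝ × ℝ => gaussianPDF 0 v p.1 * gaussianPDF 0 w (p.2 - p.1)
    exact ((measurable_gaussianPDF 0 v).comp measurable_fst).mul
      ((measurable_gaussianPDF 0 w).comp (measurable_snd.sub measurable_fst))
  rw [lintegral_lintegral_swap hunc.aemeasurable]
  have hinner : ∀ u : ℝ, (∫⁻ x, gaussianPDF 0 v x * gaussianPDF 0 w (u - x)) =
      gaussianPDF 0 (v + w) u := by
    intro u
    have h1 : ∀ x : ℝ, gaussianPDF 0 v x * gaussianPDF 0 w (u - x)
        = ENNReal.ofReal (gaussianPDFReal 0 v x * gaussianPDFReal 0 w (u - x)) := fun x =>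
      (ENNReal.ofReal_mul (gaussianPDFReal_nonneg _ _ _)).symm
    simp_rw [h1]
    rw [← ofReal_integral_eq_lintegral_ofReal (integrable_gaussianPDFReal_conv v w hv hw u)
      (Filter.Eventually.of_forall fun x =>
        mul_nonneg (gaussianPDFReal_nonneg _ _ _) (gaussianPDFReal_nonneg _ _ _)),
      gaussianPDFReal_conv v w hv hw u]
    rfl
  simp_rw [hinner]
  rw [gaussianReal_apply 0 hvw]

lemma measurable_sumMul (n : ℕ) (z : Fin n → ℝ) :
    Measurable fun g : Fin n → ℝ => ∑ i, g i * z i :=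
  Finset.measurable_sum _ fun i _ => (measurable_pi_apply i).mul_const _

lemma map_linear (n : ℕ) : ∀ z : Fin n → ℝ,
    Measure.map (fun g : Fin n → ℝ => ∑ i, g i * z i) (stdGaussian n)
      = gaussianReal 0 (∑ i, (⟨z i ^ 2, sq_nonneg _⟩ : ℝ≥0)) := by
  induction n with
  | zero =>
      intro z
      have h0 : (fun g : Fin 0 → ℝ => ∑ i, g i * z i) = fun _ => (0:ℝ) := by
        funext g; simp
      rw [h0, Measure.map_const, measure_univ, one_smul]
      convert (gaussianReal_zero_var (0:ℝ)).symm
      exact Fintype.sum_empty _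
  | succ n ih =>
      intro z
      have hmp := measurePreserving_piFinSuccAbove (fun _ : Fin (n+1) => gaussianReal 0 1) 0
      have hpi : stdGaussian (n+1)
          = Measure.map (MeasurableEquiv.piFinSuccAbove (fun _ : Fin (n+1) => ℝ) 0).symm
              ((gaussianReal 0 1).prod (stdGaussian n)) :=
        ((hmp.symm _).map_eq).symm
      rw [hpi, Measure.map_map (measurable_sumMul _ z) (MeasurableEquiv.measurable _)]
      have hcomp : ((fun g : Fin (n+1) → ℝ => ∑ i, g i * z i) ∘
          (MeasurableEquiv.piFinSuccAbove (fun _ : Fin (n+1) => ℝ) 0).symm)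
          = fun p : ℝ × (Fin n → ℝ) => p.1 * z 0 + ∑ j, p.2 j * z j.succ := by
        funext p
        simp [MeasurableEquiv.piFinSuccAbove_symm_apply, Fin.sum_univ_succ]
      rw [hcomp]
      have hcomp2 : (fun p : ℝ × (Fin n → ℝ) => p.1 * z 0 + ∑ j, p.2 j * z j.succ)
          = (fun q : ℝ × ℝ => q.1 + q.2) ∘
            (Prod.map (fun x : ℝ => x * z 0) (fun g : Fin n → ℝ => ∑ j, g j * z j.succ)) := rfl
      have hF : Measurable fun x : ℝ => x * z 0 := measurable_id.mul_const _
      have hG : Measurable fun g : Fin n → ℝ => ∑ j, g j * z j.succ := measurable_sumMul n _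
      rw [hcomp2, ← Measure.map_map measurable_add (hF.prodMap hG),
        ← Measure.map_prod_map _ _ hF hG]
      rw [show Measure.map (fun x : ℝ => x * z 0) (gaussianReal 0 1)
          = gaussianReal 0 (⟨(z 0) ^ 2, sq_nonneg _⟩ : ℝ≥0) by
        have h := gaussianReal_map_mul_const (μ := 0) (v := 1) (z 0)
        simp at h
        exact h]
      rw [ih (fun j => z j.succ)]
      refine (gaussian_conv _ _).trans ?_
      congr 1
      exact (Fin.sum_univ_succ (fun i => (⟨z i ^ 2, sq_nonneg _⟩ : ℝ≥0))).symm

lemma gauss_tail (V : ℝ≥0) (hV : V ≠ 0) (l : ℝ) (hl : 0 < l) :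
    ∫ x, phi l x ∂(gaussianReal 0 V) ≤
      Real.sqrt (2 / π) * Real.sqrt (V:ℝ) * rexp (-l ^ 2 / (2 * (V:ℝ))) := by
  have hVpos : (0:ℝ) < V := NNReal.coe_pos.mpr (lt_of_le_of_ne (zero_le : (0:ℝ≥0) ≤ V) (Ne.symm hV))
  set f : ℝ → ℝ := gaussianPDFReal 0 V with hf_def
  have hfnn : ∀ x, 0 ≤ f x := gaussianPDFReal_nonneg 0 V
  have hfmeas : Measurable f := measurable_gaussianPDFReal 0 V
  have hb : (0:ℝ) < (2 * (V:ℝ))⁻¹ := by positivity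
  have hfeq : ∀ t : ℝ, f t = (Real.sqrt (2 * π * (V:ℝ)))⁻¹ * rexp (-(2 * (V:ℝ))⁻¹ * t ^ 2) := by
    intro t
    rw [hf_def]
    simp only [gaussianPDFReal_def]
    congr 2
    ring
  have hfeven : ∀ x, f (-x) = f x := by
    intro x; rw [hfeq, hfeq, neg_sq]
  rw [gaussianReal_of_var_ne_zero 0 hV]
  have hgpdf : gaussianPDF 0 V = fun x => ((f x).toNNReal : ℝ≥0∞) := rfl
  rw [hgpdf, integral_withDensity_eq_integral_smul (hfmeas.real_toNNReal) (phi l)]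
  have hsmul : ∀ x, (f x).toNNReal • phi l x = f x * phi l x := by
    intro x
    rw [NNReal.smul_def, smul_eq_mul, Real.coe_toNNReal _ (hfnn x)]
  simp_rw [hsmul]
  set ψ : ℝ → ℝ := (Set.Ioi l).indicator (fun t => t * f t) with hψ_def
  have hψnn : ∀ t, 0 ≤ ψ t := fun t =>
    Set.indicator_nonneg (fun u hu => mul_nonneg (hl.trans hu).le (hfnn u)) t
  have hint0 : Integrable (fun t : ℝ => t * f t) := by
    have h1 := (integrable_mul_exp_neg_mul_sq hb).const_mul (Real.sqrt (2 * π * (V:ℝ)))⁻¹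
    refine h1.congr (Filter.Eventually.of_forall fun t => ?_)
    show (Real.sqrt (2 * π * (V:ℝ)))⁻¹ * (t * rexp (-(2 * (V:ℝ))⁻¹ * t ^ 2)) = t * f t
    rw [hfeq]; ring
  have hψint : Integrable ψ := hint0.indicator measurableSet_Ioi
  have hnegemb : MeasurableEmbedding (Neg.neg : ℝ → ℝ) :=
    (MeasurableEquiv.neg ℝ).measurableEmbedding
  have hψnegint : Integrable fun x => ψ (-x) :=
    ((Measure.measurePreserving_neg volume).integrable_comp_emb hnegemb).mpr hψint
  have hbound : ∀ x, f x * phi l x ≤ ψ x + ψ (-x) := by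
    intro x
    by_cases h : l ≤ |x|
    · simp only [phi, if_pos h]
      rcases abs_cases x with ⟨hx, hx0⟩ | ⟨hx, hx0⟩
      · have hlx : l ≤ x := hx ▸ h
        rcases eq_or_lt_of_le hlx with h' | h'
        · rw [hx, ← h', sub_self, mul_zero]
          exact add_nonneg (hψnn _) (hψnn _)
        · have hψx : ψ x = x * f x := Set.indicator_of_mem h' _
          have h2 : f x * (|x| - l) ≤ ψ x := by
            rw [hψx, hx]
            nlinarith [hfnn x, hl]
          linarith [hψnn (-x)]
      · have hlx : l ≤ -x := hx ▸ h
        rcases eq_or_lt_of_le hlx with h' | h'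
        · rw [hx, ← h']
          simp only [sub_self, mul_zero]
          exact add_nonneg (hψnn _) (hψnn _)
        · have hψx : ψ (-x) = (-x) * f (-x) := Set.indicator_of_mem h' _
          have h2 : f x * (|x| - l) ≤ ψ (-x) := by
            rw [hψx, hfeven, hx]
            nlinarith [hfnn x, hl]
          linarith [hψnn x]
    · simp only [phi, if_neg h, mul_zero]
      exact add_nonneg (hψnn _) (hψnn _)
  have hmono : ∫ x, f x * phi l x ≤ ∫ x, (ψ x + ψ (-x)) :=
    integral_mono_of_nonneg
      (Filter.Eventually.of_forall fun x => mul_nonneg (hfnn x) (phi_nonneg l x))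
      (hψint.add hψnegint) (Filter.Eventually.of_forall hbound)
  have hsum : ∫ x, (ψ x + ψ (-x)) = 2 * ∫ x in Set.Ioi l, x * f x := by
    rw [integral_add hψint hψnegint, integral_neg_eq_self ψ volume, hψ_def,
      integral_indicator measurableSet_Ioi]
    ring
  have hFTC : ∫ x in Set.Ioi l, x * rexp (-(2 * (V:ℝ))⁻¹ * x ^ 2)
      = (V:ℝ) * rexp (-l ^ 2 / (2 * (V:ℝ))) := by
    have hderiv : ∀ x ∈ Set.Ioi l,
        HasDerivAt (fun x => -(2 * (2 * (V:ℝ))⁻¹)⁻¹ * rexp (-(2 * (V:ℝ))⁻¹ * x ^ 2))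
          (x * rexp (-(2 * (V:ℝ))⁻¹ * x ^ 2)) x := by
      intro x _
      have h1 : HasDerivAt (fun x : ℝ => -(2 * (V:ℝ))⁻¹ * x ^ 2)
          (-(2 * (V:ℝ))⁻¹ * (2 * x)) x := by
        simpa [mul_comm] using ((hasDerivAt_pow 2 x).const_mul (-(2 * (V:ℝ))⁻¹))
      have h2 := (h1.exp).const_mul (-(2 * (2 * (V:ℝ))⁻¹)⁻¹)
      refine h2.congr_deriv ?_
      field_simp
    have h3 : Tendsto (fun x : ℝ => (2 * (V:ℝ))⁻¹ * x ^ 2) atTop atTop :=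
      (tendsto_pow_atTop two_ne_zero).const_mul_atTop hb
    have h4 : Tendsto (fun x : ℝ => rexp (-(2 * (V:ℝ))⁻¹ * x ^ 2)) atTop (𝓝 0) := by
      have h5 := Real.tendsto_exp_neg_atTop_nhds_zero.comp h3
      refine h5.congr fun x => ?_
      simp [Function.comp, neg_mul]
    have htend : Tendsto (fun x => -(2 * (2 * (V:ℝ))⁻¹)⁻¹ * rexp (-(2 * (V:ℝ))⁻¹ * x ^ 2))
        atTop (𝓝 0) := by
      have h6 := h4.const_mul (-(2 * (2 * (V:ℝ))⁻¹)⁻¹)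
      simpa using h6
    have h7 := integral_Ioi_of_hasDerivAt_of_tendsto
      (Continuous.continuousWithinAt (by fun_prop)) hderiv
      ((integrable_mul_exp_neg_mul_sq hb).integrableOn) htend
    rw [h7]
    have h8 : (2 * (2 * (V:ℝ))⁻¹)⁻¹ = (V:ℝ) := by
      field_simp
    have h9 : -(2 * (V:ℝ))⁻¹ * l ^ 2 = -l ^ 2 / (2 * (V:ℝ)) := by
      field_simp
    rw [h8, h9]
    ring
  have htail : ∫ x in Set.Ioi l, x * f x
      = (Real.sqrt (2 * π * (V:ℝ)))⁻¹ * ((V:ℝ) * rexp (-l ^ 2 / (2 * (V:ℝ)))) := by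
    have h1 : ∀ x : ℝ, x * f x
        = (Real.sqrt (2 * π * (V:ℝ)))⁻¹ * (x * rexp (-(2 * (V:ℝ))⁻¹ * x ^ 2)) := fun x => by
      rw [hfeq]; ring
    simp_rw [h1]
    rw [integral_const_mul, hFTC]
  have hfinal : 2 * ((Real.sqrt (2 * π * (V:ℝ)))⁻¹ * ((V:ℝ) * rexp (-l ^ 2 / (2 * (V:ℝ)))))
      = Real.sqrt (2 / π) * Real.sqrt (V:ℝ) * rexp (-l ^ 2 / (2 * (V:ℝ))) := by
    have h7 : Real.sqrt (2 / π) * Real.sqrt (V:ℝ) = 2 * (V:ℝ) / Real.sqrt (2 * π * (V:ℝ)) := by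
      rw [← Real.sqrt_mul (by positivity)]
      rw [show (2 / π) * (V:ℝ) = (2 * (V:ℝ)) ^ 2 / (2 * π * (V:ℝ)) by
        field_simp]
      rw [Real.sqrt_div (sq_nonneg _), Real.sqrt_sq (by linarith)]
    rw [h7]
    ring
  calc ∫ x, f x * phi l x ≤ ∫ x, (ψ x + ψ (-x)) := hmono
    _ = 2 * ∫ x in Set.Ioi l, x * f x := hsum
    _ = 2 * ((Real.sqrt (2 * π * (V:ℝ)))⁻¹ * ((V:ℝ) * rexp (-l ^ 2 / (2 * (V:ℝ))))) := by
        rw [htail]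
    _ = _ := hfinal

theorem stmt6 (n : ℕ) (z : Fin n → ℝ) (hz : z ≠ 0) (l : ℝ) (hl : 0 < l) :
    ∫ g, phi l (∑ i, g i * z i) ∂(stdGaussian n) ≤
      Real.sqrt (2 / Real.pi) * Real.sqrt (∑ i, z i ^ 2) *
        Real.exp (-l ^ 2 / (2 * (∑ i, z i ^ 2))) := by
  have hS : Measurable fun g : Fin n → ℝ => ∑ i, g i * z i := measurable_sumMul n z
  have hmap := map_linear n z
  set Vnn : ℝ≥0 := ∑ i, (⟨z i ^ 2, sq_nonneg _⟩ : ℝ≥0) with hVnn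
  have hcoe : ((Vnn : ℝ≥0) : ℝ) = ∑ i, z i ^ 2 := by
    rw [hVnn]
    exact NNReal.coe_sum _ _
  have hpos : 0 < ∑ i, z i ^ 2 := by
    obtain ⟨i, hi⟩ := Function.ne_iff.mp hz
    exact Finset.sum_pos' (fun j _ => sq_nonneg _) ⟨i, Finset.mem_univ i, pow_two_pos_of_ne_zero hi⟩
  have hVne : Vnn ≠ 0 := by
    intro h
    rw [h] at hcoe
    simp at hcoe
    linarith [hcoe ▸ hpos]
  have htr : ∫ g, phi l (∑ i, g i * z i) ∂(stdGaussian n)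
      = ∫ x, phi l x ∂(gaussianReal 0 Vnn) := by
    rw [← hmap, integral_map hS.aemeasurable ((measurable_phi l).aestronglyMeasurable)]
  rw [htr, ← hcoe]
  exact gauss_tail Vnn hVne l hl
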